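/- (Lemma 2) Let n ≥ 1 be an integer and η ∈ ℝ, and let E be a region of strong effect determined by data s, μ_1 > ... > μ_s > 0 and 0 < p_1 < ... < p_{s+1} = 1. Then the maximum over E of the type II error probability β is attained at a corner: for every (μ,p) ∈ E, β(n,η,μ,p) ≤ max_{i=1,...,s} β(n,η,μ_i,p_i), and each corner (μ_i,p_i) belongs to E. -/

import Mathlib

open MeasureTheory Real

/-- Standard normal density. -/
noncomputable def stdphi (t : ℝ) : ℝ := (Real.sqrt (2 * Real.pi))⁻¹ * Real.exp (-t ^ 2 / 2)

/-- Standard normal CDF. -/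
noncomputable def stdPhi (x : ℝ) : ℝ := ∫ t in Set.Iic x, stdphi t

lemma stdphi_nonneg (t : ℝ) : 0 ≤ stdphi t := by
  unfold stdphi
  positivity

lemma stdphi_integrable : Integrable stdphi := by
  have h : Integrable (fun t : ℝ => Real.exp (-(2⁻¹ : ℝ) * t ^ 2)) :=
    integrable_exp_neg_mul_sq (by norm_num)
  have h2 := h.const_mul (Real.sqrt (2 * Real.pi))⁻¹
  refine h2.congr ?_
  filter_upwards with t
  unfold stdphi
  ring_nf

lemma stdPhi_mono : Monotone stdPhi := by
  intro x y hxy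
  unfold stdPhi
  refine setIntegral_mono_set stdphi_integrable.integrableOn ?_ ?_
  · filter_upwards with t using stdphi_nonneg t
  · exact HasSubset.Subset.eventuallyLE (Set.Iic_subset_Iic.mpr hxy)

lemma nat_choose_id (m k : ℕ) (hk : k ≤ m) :
    (m + 1 - k) * (m + 1).choose k = (m + 1) * m.choose k := by
  have h1 : (m + 1).choose k = (m + 1).choose (m + 1 - k) :=
    (Nat.choose_symm (by omega)).symm
  have h2 := Nat.add_one_mul_choose_eq m (m - k)
  have h3 : m - k + 1 = m + 1 - k := by omega
  have h4 : m.choose (m - k) = m.choose k := by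
    rw [Nat.choose_symm hk]
  rw [h1, ← h3, ← h4, h2]
  simp [Nat.succ_eq_add_one, Nat.mul_comm]

lemma binom_hasDerivAt (m : ℕ) (f : ℕ → ℝ) (p : ℝ) :
    HasDerivAt (fun q : ℝ => ∑ k ∈ Finset.range (m + 2),
        ((m + 1).choose k : ℝ) * q ^ k * (1 - q) ^ (m + 1 - k) * f k)
      (∑ k ∈ Finset.range (m + 1),
        ((m : ℝ) + 1) * (m.choose k : ℝ) * p ^ k * (1 - p) ^ (m - k) * (f (k + 1) - f k)) p := by
  have hterm : ∀ k ∈ Finset.range (m + 2),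
      HasDerivAt (fun q : ℝ => ((m + 1).choose k : ℝ) * q ^ k * (1 - q) ^ (m + 1 - k) * f k)
        ((((m + 1).choose k : ℝ) * ((k : ℝ) * p ^ (k - 1)) * (1 - p) ^ (m + 1 - k) +
          ((m + 1).choose k : ℝ) * p ^ k * (((m + 1 - k : ℕ) : ℝ) * (1 - p) ^ (m + 1 - k - 1) * (-1))) * f k) p := by
    intro k _
    have h1 : HasDerivAt (fun q : ℝ => ((m + 1).choose k : ℝ) * q ^ k)
        (((m + 1).choose k : ℝ) * ((k : ℝ) * p ^ (k - 1))) p :=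
      (hasDerivAt_pow k p).const_mul _
    have hin : HasDerivAt (fun q : ℝ => 1 - q) (-1) p := by
      simpa using (hasDerivAt_id p).const_sub 1
    have h2 : HasDerivAt (fun q : ℝ => (1 - q) ^ (m + 1 - k))
        (((m + 1 - k : ℕ) : ℝ) * (1 - p) ^ (m + 1 - k - 1) * (-1)) p :=
      HasDerivAt.comp p (hasDerivAt_pow (m + 1 - k) (1 - p)) hin
    exact ((h1.mul h2).mul_const (f k))
  have hsum := HasDerivAt.fun_sum hterm
  refine hsum.congr_deriv (Eq.symm ?_)
  -- identity between the two sums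
  have expand : ∀ k, (((m + 1).choose k : ℝ) * ((k : ℝ) * p ^ (k - 1)) * (1 - p) ^ (m + 1 - k) +
          ((m + 1).choose k : ℝ) * p ^ k * (((m + 1 - k : ℕ) : ℝ) * (1 - p) ^ (m + 1 - k - 1) * (-1))) * f k
      = (((m + 1).choose k : ℝ) * (k : ℝ) * p ^ (k - 1) * (1 - p) ^ (m + 1 - k) * f k)
        - (((m + 1).choose k : ℝ) * ((m + 1 - k : ℕ) : ℝ) * p ^ k * (1 - p) ^ (m + 1 - k - 1) * f k) := by
    intro k; ring
  rw [Finset.sum_congr rfl (fun k _ => expand k), Finset.sum_sub_distrib]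
  have hA : ∑ k ∈ Finset.range (m + 2),
      (((m + 1).choose k : ℝ) * (k : ℝ) * p ^ (k - 1) * (1 - p) ^ (m + 1 - k) * f k)
      = ∑ k ∈ Finset.range (m + 1),
        ((m : ℝ) + 1) * (m.choose k : ℝ) * p ^ k * (1 - p) ^ (m - k) * f (k + 1) := by
    rw [Finset.sum_range_succ' _ (m + 1)]
    simp only [Nat.cast_zero, mul_zero, zero_mul, add_zero, Nat.cast_ofNat]
    refine Finset.sum_congr rfl fun j hj => ?_
    have hid := Nat.add_one_mul_choose_eq m j
    have hcast : ((j : ℝ) + 1) * (((m + 1).choose (j + 1) : ℕ) : ℝ) = ((m : ℝ) + 1) * (m.choose j : ℝ) := by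
      have := congrArg (fun x : ℕ => (x : ℝ)) hid
      push_cast at this
      linarith [this]
    have hexp : m + 1 - (j + 1) = m - j := by omega
    rw [hexp]
    have hk1 : (j + 1) - 1 = j := by omega
    rw [hk1]
    push_cast
    linear_combination (p ^ j * (1 - p) ^ (m - j) * f (j + 1)) * hcast
  have hB : ∑ k ∈ Finset.range (m + 2),
      (((m + 1).choose k : ℝ) * ((m + 1 - k : ℕ) : ℝ) * p ^ k * (1 - p) ^ (m + 1 - k - 1) * f k)
      = ∑ k ∈ Finset.range (m + 1),
        ((m : ℝ) + 1) * (m.choose k : ℝ) * p ^ k * (1 - p) ^ (m - k) * f k := by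
    rw [Finset.sum_range_succ]
    simp only [Nat.sub_self, Nat.cast_zero, mul_zero, zero_mul, add_zero]
    refine Finset.sum_congr rfl fun k hk => ?_
    have hk' : k ≤ m := by
      simpa using Nat.lt_succ_iff.mp (Finset.mem_range.mp hk)
    have hid := nat_choose_id m k hk'
    have hcast : (((m + 1 - k : ℕ) : ℝ)) * (((m + 1).choose k : ℕ) : ℝ) = ((m : ℝ) + 1) * (m.choose k : ℝ) := by
      have := congrArg (fun x : ℕ => (x : ℝ)) hid
      push_cast [Nat.cast_sub (by omega : k ≤ m + 1)] at this
      push_cast [Nat.cast_sub (by omega : k ≤ m + 1)]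
      linarith [this]
    have hexp : m + 1 - k - 1 = m - k := by omega
    rw [hexp]
    linear_combination (p ^ k * (1 - p) ^ (m - k) * f k) * hcast
  rw [hA, hB, ← Finset.sum_sub_distrib]
  refine Finset.sum_congr rfl fun k _ => ?_
  ring

lemma binom_antitoneOn (m : ℕ) (f : ℕ → ℝ) (hf : ∀ k, f (k + 1) ≤ f k) :
    AntitoneOn (fun p : ℝ => ∑ k ∈ Finset.range (m + 2),
        ((m + 1).choose k : ℝ) * p ^ k * (1 - p) ^ (m + 1 - k) * f k) (Set.Icc 0 1) := by
  set g := fun p : ℝ => ∑ k ∈ Finset.range (m + 2),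
      ((m + 1).choose k : ℝ) * p ^ k * (1 - p) ^ (m + 1 - k) * f k with hg
  have hd : ∀ p : ℝ, HasDerivAt g (∑ k ∈ Finset.range (m + 1),
      ((m : ℝ) + 1) * (m.choose k : ℝ) * p ^ k * (1 - p) ^ (m - k) * (f (k + 1) - f k)) p :=
    fun p => binom_hasDerivAt m f p
  refine antitoneOn_of_deriv_nonpos (convex_Icc 0 1) ?_ ?_ ?_
  · exact fun p _ => ((hd p).continuousAt).continuousWithinAt
  · exact fun p _ => ((hd p).differentiableAt).differentiableWithinAt
  · intro p hp
    rw [interior_Icc] at hp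
    rw [(hd p).deriv]
    apply Finset.sum_nonpos
    intro k _
    have h1 : (0 : ℝ) ≤ ((m : ℝ) + 1) * (m.choose k : ℝ) * p ^ k * (1 - p) ^ (m - k) := by
      have hpa : (0:ℝ) ≤ p := hp.1.le
      have hpb : (0:ℝ) ≤ 1 - p := by linarith [hp.2]
      positivity
    have h2 : f (k + 1) - f k ≤ 0 := by linarith [hf k]
    exact mul_nonpos_of_nonneg_of_nonpos h1 h2

/-- The type II error function β(n,η,μ,p). -/
noncomputable def betaFn (n : ℕ) (η μ p : ℝ) : ℝ :=
  ∑ k ∈ Finset.range (n + 1), (n.choose k : ℝ) * p ^ k * (1 - p) ^ (n - k) *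
    stdPhi (Real.sqrt ((n : ℝ) / 2) * (η - (k : ℝ) * μ / n))

/-- (Lemma 2) On a region of strong effect, the type II error probability `β` is
maximized at one of the corners `(μ_i, p_i)`, and each corner belongs to the region. -/
theorem betaFn_max_on_strong_effect (n : ℕ) (hn : 1 ≤ n) (η : ℝ)
    (s : ℕ) (hs : 1 ≤ s) (μs : Fin s → ℝ) (ps : Fin (s + 1) → ℝ)
    (hμanti : StrictAnti μs) (hμpos : ∀ i, 0 < μs i)
    (hpmono : StrictMono ps) (hp0 : 0 < ps 0) (hplast : ps (Fin.last s) = 1)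
    (E : Set (ℝ × ℝ))
    (hE : E = {q : ℝ × ℝ | ∃ i : Fin s,
      ps i.castSucc ≤ q.2 ∧ q.2 ≤ ps i.succ ∧ μs i ≤ q.1}) :
    (∀ q ∈ E, ∃ i : Fin s, betaFn n η q.1 q.2 ≤ betaFn n η (μs i) (ps i.castSucc)) ∧
    (∀ i : Fin s, (μs i, ps i.castSucc) ∈ E) := by
  subst hE
  constructor
  · rintro ⟨μ, p⟩ ⟨i, hp1, hp2, hμ⟩
    refine ⟨i, ?_⟩
    simp only at hp1 hp2 hμ
    -- basic bounds
    have hps_le_one : ∀ j : Fin (s + 1), ps j ≤ 1 := by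
      intro j
      rw [← hplast]
      exact hpmono.monotone (Fin.le_last j)
    have hps_pos : ∀ j : Fin (s + 1), 0 < ps j := by
      intro j
      exact lt_of_lt_of_le hp0 (hpmono.monotone (Fin.zero_le j))
    have hp_pos : 0 < p := lt_of_lt_of_le (hps_pos _) hp1
    have hp_le1 : p ≤ 1 := le_trans hp2 (hps_le_one _)
    have hpi_mem : ps i.castSucc ∈ Set.Icc (0:ℝ) 1 := ⟨(hps_pos _).le, hps_le_one _⟩
    have hp_mem : p ∈ Set.Icc (0:ℝ) 1 := ⟨hp_pos.le, hp_le1⟩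
    -- step 1 : monotone in μ
    have step1 : betaFn n η μ p ≤ betaFn n η (μs i) p := by
      unfold betaFn
      refine Finset.sum_le_sum fun k _ => ?_
      have hcoef : (0 : ℝ) ≤ (n.choose k : ℝ) * p ^ k * (1 - p) ^ (n - k) := by
        have h1 : (0:ℝ) ≤ 1 - p := by linarith
        positivity
      refine mul_le_mul_of_nonneg_left ?_ hcoef
      refine stdPhi_mono ?_
      refine mul_le_mul_of_nonneg_left ?_ (Real.sqrt_nonneg _)
      have hnpos : (0:ℝ) < n := by exact_mod_cast hn
      have h := mul_le_mul_of_nonneg_left hμ (Nat.cast_nonneg k : (0:ℝ) ≤ (k:ℝ))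
      have h3 : (k:ℝ) * μs i / n ≤ (k:ℝ) * μ / n := by
        rw [div_eq_mul_inv, div_eq_mul_inv]
        exact mul_le_mul_of_nonneg_right h (inv_nonneg.mpr hnpos.le)
      linarith
    -- step 2 : antitone in p
    have step2 : betaFn n η (μs i) p ≤ betaFn n η (μs i) (ps i.castSucc) := by
      obtain ⟨m, rfl⟩ : ∃ m, n = m + 1 := ⟨n - 1, by omega⟩
      have := binom_antitoneOn m
        (fun k => stdPhi (Real.sqrt (((m + 1 : ℕ) : ℝ) / 2) * (η - (k : ℝ) * μs i / ((m + 1 : ℕ) : ℝ))))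
        (fun k => by
          refine stdPhi_mono ?_
          refine mul_le_mul_of_nonneg_left ?_ (Real.sqrt_nonneg _)
          have hnpos : (0:ℝ) < ((m + 1 : ℕ) : ℝ) := by positivity
          have hμi := hμpos i
          have h : (k : ℝ) * μs i ≤ ((k + 1 : ℕ) : ℝ) * μs i := by
            push_cast; nlinarith
          have h3 : (k:ℝ) * μs i / ((m+1:ℕ):ℝ) ≤ ((k+1:ℕ):ℝ) * μs i / ((m+1:ℕ):ℝ) := by
            rw [div_eq_mul_inv, div_eq_mul_inv]
            exact mul_le_mul_of_nonneg_right h (inv_nonneg.mpr hnpos.le)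
          linarith)
      have happ := this hpi_mem hp_mem hp1
      unfold betaFn
      exact happ
    exact le_trans step1 step2
  · intro i
    exact ⟨i, le_refl _, (hpmono (Fin.castSucc_lt_succ : i.castSucc < i.succ)).le, le_refl _⟩
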